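/- For n ≥ 2, L_{h,n}^{⌊(n-2)/2⌋}(x) = L_{h,n}(x) − 2 if n is even, and L_{h,n}^{⌊(n-2)/2⌋}(x) = L_{h,n}(x) − n·h(x) if n is odd. -/

import Mathlib

open Finset

/-- Incomplete h-Fibonacci polynomials: F_{h,n}^l = ∑_{i=0}^l C(n-1-i,i) h^(n-1-2i). -/
noncomputable def incF (h : ℝ) (n l : ℕ) : ℝ :=
  ∑ i ∈ Finset.range (l + 1), (Nat.choose (n - 1 - i) i : ℝ) * h ^ (n - 1 - 2 * i)

/-- Incomplete h-Lucas polynomials: L_{h,n}^l = ∑_{i=0}^l (n/(n-i)) C(n-i,i) h^(n-2i). -/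
noncomputable def incL (h : ℝ) (n l : ℕ) : ℝ :=
  ∑ i ∈ Finset.range (l + 1), ((n : ℝ) / ((n - i : ℕ) : ℝ)) * (Nat.choose (n - i) i : ℝ) * h ^ (n - 2 * i)

/-- h-Fibonacci sequence. -/
noncomputable def Fh (h : ℝ) : ℕ → ℝ
  | 0 => 0
  | 1 => 1
  | n + 2 => h * Fh h (n + 1) + Fh h n

/-- h-Lucas sequence. -/
noncomputable def Lh (h : ℝ) : ℕ → ℝ
  | 0 => 2
  | 1 => h
  | n + 2 => h * Lh h (n + 1) + Lh h n


noncomputable def S (h : ℝ) (n : ℕ) : ℝ :=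
  ∑ i ∈ Finset.range (n / 2 + 1), (Nat.choose (n - i) i : ℝ) * h ^ (n - 2 * i)

lemma S_rec (h : ℝ) (n : ℕ) : S h (n + 2) = h * S h (n + 1) + S h n := by
  unfold S
  rcases Nat.even_or_odd n with ⟨m, rfl⟩ | ⟨m, rfl⟩
  · have h2 : (m + m + 2) / 2 + 1 = m + 2 := by omega
    have h1 : (m + m + 1) / 2 + 1 = m + 1 := by omega
    have h0 : (m + m) / 2 + 1 = m + 1 := by omega
    rw [h2, h1, h0, Finset.sum_range_succ', Finset.mul_sum]
    -- LHS sum: ∑ i in range (m+1), C(m+m+2-(i+1), i+1) h^(m+m+2-2(i+1)) + C(m+m+2,0) h^(m+m+2)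
    have key : ∀ i ∈ Finset.range (m + 1),
        ((m + m + 2 - (i + 1)).choose (i + 1) : ℝ) * h ^ (m + m + 2 - 2 * (i + 1))
        = ((m + m - i).choose i : ℝ) * h ^ (m + m - 2 * i)
          + ((m + m - i).choose (i + 1) : ℝ) * h ^ (m + m - 2 * i) := by
      intro i hi
      rw [Finset.mem_range] at hi
      have e1 : m + m + 2 - (i + 1) = (m + m - i) + 1 := by omega
      have e2 : m + m + 2 - 2 * (i + 1) = m + m - 2 * i := by omega
      rw [e1, e2, Nat.choose_succ_succ, Nat.cast_add, add_mul]
    rw [Finset.sum_congr rfl key, Finset.sum_add_distrib]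
    have main : ∑ x ∈ Finset.range (m + 1), ((m + m - x).choose (x + 1) : ℝ) * h ^ (m + m - 2 * x)
        + ((m + m + 2 - 0).choose 0 : ℝ) * h ^ (m + m + 2 - 2 * 0)
        = ∑ i ∈ Finset.range (m + 1), h * (((m + m + 1 - i).choose i : ℝ) * h ^ (m + m + 1 - 2 * i)) := by
      rw [Finset.sum_range_succ' (fun i => h * (((m + m + 1 - i).choose i : ℝ) * h ^ (m + m + 1 - 2 * i))) m,
        Finset.sum_range_succ]
      have e0 : ((m + m - m).choose (m + 1) : ℝ) = 0 := by
        rw [Nat.choose_eq_zero_of_lt (by omega)]; norm_num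
      rw [e0]
      simp only [Nat.choose_zero_right, Nat.cast_one, zero_mul, add_zero, Nat.sub_zero, Nat.mul_zero]
      have e1 : h * (1 * h ^ (m + m + 1)) = 1 * h ^ (m + m + 2) := by
        rw [one_mul, one_mul, ← pow_succ']
      rw [← e1]
      congr 1
      apply Finset.sum_congr rfl
      intro i hi
      rw [Finset.mem_range] at hi
      have e2 : m + m + 1 - (i + 1) = m + m - i := by omega
      have e3 : h ^ (m + m + 1 - 2 * (i + 1)) * h = h ^ (m + m - 2 * i) := by
        rw [← pow_succ]
        congr 1
        omega
      rw [e2, ← e3]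
      ring
    linarith [main]
  · have h2 : (2 * m + 1 + 2) / 2 + 1 = m + 2 := by omega
    have h1 : (2 * m + 1 + 1) / 2 + 1 = m + 2 := by omega
    have h0 : (2 * m + 1) / 2 + 1 = m + 1 := by omega
    rw [h2, h1, h0, Finset.sum_range_succ', Finset.mul_sum]
    have key : ∀ i ∈ Finset.range (m + 1),
        ((2 * m + 1 + 2 - (i + 1)).choose (i + 1) : ℝ) * h ^ (2 * m + 1 + 2 - 2 * (i + 1))
        = ((2 * m + 1 - i).choose i : ℝ) * h ^ (2 * m + 1 - 2 * i)
          + ((2 * m + 1 - i).choose (i + 1) : ℝ) * h ^ (2 * m + 1 - 2 * i) := by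
      intro i hi
      rw [Finset.mem_range] at hi
      have e1 : 2 * m + 1 + 2 - (i + 1) = (2 * m + 1 - i) + 1 := by omega
      have e2 : 2 * m + 1 + 2 - 2 * (i + 1) = 2 * m + 1 - 2 * i := by omega
      rw [e1, e2, Nat.choose_succ_succ, Nat.cast_add, add_mul]
    rw [Finset.sum_congr rfl key, Finset.sum_add_distrib]
    have main : ∑ x ∈ Finset.range (m + 1), ((2 * m + 1 - x).choose (x + 1) : ℝ) * h ^ (2 * m + 1 - 2 * x)
        + ((2 * m + 1 + 2 - 0).choose 0 : ℝ) * h ^ (2 * m + 1 + 2 - 2 * 0)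
        = ∑ i ∈ Finset.range (m + 2), h * (((2 * m + 1 + 1 - i).choose i : ℝ) * h ^ (2 * m + 1 + 1 - 2 * i)) := by
      rw [Finset.sum_range_succ' (fun i => h * (((2 * m + 1 + 1 - i).choose i : ℝ) * h ^ (2 * m + 1 + 1 - 2 * i))) (m + 1)]
      simp only [Nat.choose_zero_right, Nat.cast_one, Nat.sub_zero, Nat.mul_zero]
      have e1 : h * (1 * h ^ (2 * m + 1 + 1)) = 1 * h ^ (2 * m + 1 + 2) := by
        rw [one_mul, one_mul, ← pow_succ']
      rw [e1]
      congr 1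
      apply Finset.sum_congr rfl
      intro i hi
      rw [Finset.mem_range] at hi
      have e2 : 2 * m + 1 + 1 - (i + 1) = 2 * m + 1 - i := by omega
      have e3 : h ^ (2 * m + 1 + 1 - 2 * (i + 1)) * h = h ^ (2 * m + 1 - 2 * i) := by
        rw [← pow_succ]
        congr 1
        omega
      rw [e2, ← e3]
      ring
    linarith [main]

lemma Fh_eq_S (h : ℝ) : ∀ n, Fh h (n + 1) = S h n := by
  have key : ∀ n, Fh h (n + 1) = S h n ∧ Fh h (n + 2) = S h (n + 1) := by
    intro n
    induction n with
    | zero =>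
      constructor
      · simp [Fh, S]
      · simp [Fh, S]
    | succ k ih =>
      refine ⟨ih.2, ?_⟩
      show Fh h (k + 1 + 2) = S h (k + 2)
      rw [S_rec, show Fh h (k + 1 + 2) = h * Fh h (k + 2) + Fh h (k + 1) from rfl, ih.1, ih.2]
  exact fun n => (key n).1

lemma Lh_eq (h : ℝ) : ∀ n, Lh h (n + 1) = Fh h n + Fh h (n + 2) := by
  have key : ∀ n, Lh h (n + 1) = Fh h n + Fh h (n + 2) ∧
      Lh h (n + 2) = Fh h (n + 1) + Fh h (n + 3) := by
    intro n
    induction n with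
    | zero =>
      constructor
      · show Lh h 1 = Fh h 0 + Fh h 2
        show h = 0 + (h * 1 + 0)
        ring
      · show Lh h 2 = Fh h 1 + Fh h 3
        show h * h + 2 = 1 + (h * (h * 1 + 0) + 1)
        ring
    | succ k ih =>
      refine ⟨ih.2, ?_⟩
      show Lh h (k + 1 + 2) = Fh h (k + 2) + Fh h (k + 2 + 2)
      rw [show Lh h (k + 1 + 2) = h * Lh h (k + 2) + Lh h (k + 1) from rfl, ih.1, ih.2,
        show Fh h (k + 2 + 2) = h * Fh h (k + 3) + Fh h (k + 2) from rfl,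
        show Fh h (k + 2) = h * Fh h (k + 1) + Fh h k from rfl]
      ring
  exact fun n => (key n).1

lemma coeff_eq (n j : ℕ) (hj : 1 ≤ j) (hjn : 2 * j ≤ n) :
    ((n : ℝ) / ((n - j : ℕ) : ℝ)) * (Nat.choose (n - j) j : ℝ)
      = (Nat.choose (n - j) j : ℝ) + (Nat.choose (n - 1 - j) (j - 1) : ℝ) := by
  have hnj : j ≤ n - j := by omega
  have ha : (n - j : ℕ) ≠ 0 := by omega
  have hN : (n - j) * Nat.choose (n - j - 1) (j - 1) = Nat.choose (n - j) j * j := by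
    have := Nat.add_one_mul_choose_eq (n - j - 1) (j - 1)
    rwa [show n - j - 1 + 1 = n - j by omega,
      show j - 1 + 1 = j by omega] at this
  have hN2 : n * Nat.choose (n - j) j
      = (n - j) * (Nat.choose (n - j) j + Nat.choose (n - 1 - j) (j - 1)) := by
    rw [show n - 1 - j = n - j - 1 by omega, Nat.mul_add, hN]
    have : n = (n - j) + j := by omega
    calc n * Nat.choose (n - j) j = ((n - j) + j) * Nat.choose (n - j) j := by rw [← this]
      _ = (n - j) * Nat.choose (n - j) j + Nat.choose (n - j) j * j := by ring
  have hC : (n : ℝ) * (Nat.choose (n - j) j : ℝ)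
      = ((n - j : ℕ) : ℝ) * ((Nat.choose (n - j) j : ℝ) + (Nat.choose (n - 1 - j) (j - 1) : ℝ)) := by
    exact_mod_cast congrArg (Nat.cast : ℕ → ℝ) hN2
  have ha' : ((n - j : ℕ) : ℝ) ≠ 0 := Nat.cast_ne_zero.mpr ha
  field_simp
  linarith [hC]

theorem incL_penultimate (h : ℝ) (n : ℕ) (hn : 2 ≤ n) :
    (Even n → incL h n ((n - 2) / 2) = Lh h n - 2) ∧
    (Odd n → incL h n ((n - 2) / 2) = Lh h n - (n : ℝ) * h) := by
  have hcast : ∀ m : ℕ, 0 < m → ((m : ℕ) : ℝ) ≠ 0 := fun m hm => Nat.cast_ne_zero.mpr (by omega)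
  constructor
  · intro he
    obtain ⟨k, rfl⟩ : ∃ k, n = 2 * k + 2 := by
      rcases he with ⟨m, hm⟩; exact ⟨m - 1, by omega⟩
    have hl : (2 * k + 2 - 2) / 2 = k := by omega
    rw [hl]
    have hL : Lh h (2 * k + 2) = S h (2 * k) + S h (2 * k + 2) := by
      rw [show Lh h (2 * k + 2) = Lh h ((2 * k + 1) + 1) from rfl, Lh_eq,
        show Fh h (2 * k + 1) = S h (2 * k) from Fh_eq_S h (2 * k),
        show Fh h (2 * k + 1 + 2) = S h (2 * k + 2) from Fh_eq_S h (2 * k + 2)]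
    have hS2 : S h (2 * k + 2) = ∑ i ∈ Finset.range k,
        ((2 * k + 2 - (i + 1)).choose (i + 1) : ℝ) * h ^ (2 * k + 2 - 2 * (i + 1))
        + h ^ (2 * k + 2) + 1 := by
      unfold S
      rw [show (2 * k + 2) / 2 + 1 = (k + 1) + 1 by omega, Finset.sum_range_succ,
        Finset.sum_range_succ']
      rw [show 2 * k + 2 - (k + 1) = k + 1 by omega, show 2 * k + 2 - 2 * (k + 1) = 0 by omega,
        Nat.choose_self]
      norm_num
    have hS0 : S h (2 * k) = ∑ i ∈ Finset.range k,
        ((2 * k - i).choose i : ℝ) * h ^ (2 * k - 2 * i) + 1 := by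
      unfold S
      rw [show (2 * k) / 2 + 1 = k + 1 by omega, Finset.sum_range_succ,
        show 2 * k - k = k by omega, show 2 * k - 2 * k = 0 by omega, Nat.choose_self]
      norm_num
    have hI : incL h (2 * k + 2) k = ∑ i ∈ Finset.range k,
        (((2 * k + 2 - (i + 1)).choose (i + 1) : ℝ) * h ^ (2 * k + 2 - 2 * (i + 1))
          + ((2 * k - i).choose i : ℝ) * h ^ (2 * k - 2 * i)) + h ^ (2 * k + 2) := by
      unfold incL
      rw [Finset.sum_range_succ']
      congr 1
      · apply Finset.sum_congr rfl
        intro i hi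
        rw [Finset.mem_range] at hi
        rw [coeff_eq (2 * k + 2) (i + 1) (by omega) (by omega),
          show 2 * k + 2 - 1 - (i + 1) = 2 * k - i by omega, Nat.add_sub_cancel,
          show 2 * k + 2 - 2 * (i + 1) = 2 * k - 2 * i by omega, add_mul]
      · have h0 : ((2 * k + 2 : ℕ) : ℝ) ≠ 0 := hcast _ (by omega)
        simp only [Nat.sub_zero, Nat.mul_zero, Nat.choose_zero_right, Nat.cast_one, mul_one,
          div_self h0, one_mul]
    rw [hI, Finset.sum_add_distrib, hL, hS2, hS0]
    ring
  · intro ho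
    obtain ⟨k, rfl⟩ : ∃ k, n = 2 * k + 3 := by
      rcases ho with ⟨m, hm⟩; exact ⟨m - 1, by omega⟩
    have hl : (2 * k + 3 - 2) / 2 = k := by omega
    rw [hl]
    have hL : Lh h (2 * k + 3) = S h (2 * k + 1) + S h (2 * k + 3) := by
      rw [show Lh h (2 * k + 3) = Lh h ((2 * k + 2) + 1) from rfl, Lh_eq,
        show Fh h (2 * k + 2) = S h (2 * k + 1) from Fh_eq_S h (2 * k + 1),
        show Fh h (2 * k + 2 + 2) = S h (2 * k + 3) from Fh_eq_S h (2 * k + 3)]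
    have hS3 : S h (2 * k + 3) = ∑ i ∈ Finset.range k,
        ((2 * k + 3 - (i + 1)).choose (i + 1) : ℝ) * h ^ (2 * k + 3 - 2 * (i + 1))
        + h ^ (2 * k + 3) + ((k : ℝ) + 2) * h := by
      unfold S
      rw [show (2 * k + 3) / 2 + 1 = (k + 1) + 1 by omega, Finset.sum_range_succ,
        Finset.sum_range_succ']
      rw [show 2 * k + 3 - (k + 1) = k + 2 by omega, show 2 * k + 3 - 2 * (k + 1) = 1 by omega,
        Nat.choose_succ_self_right]
      simp only [Nat.sub_zero, Nat.mul_zero, Nat.choose_zero_right, Nat.cast_one, one_mul]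
      push_cast
      ring
    have hS1 : S h (2 * k + 1) = ∑ i ∈ Finset.range k,
        ((2 * k + 1 - i).choose i : ℝ) * h ^ (2 * k + 1 - 2 * i) + ((k : ℝ) + 1) * h := by
      unfold S
      rw [show (2 * k + 1) / 2 + 1 = k + 1 by omega, Finset.sum_range_succ,
        show 2 * k + 1 - k = k + 1 by omega, show 2 * k + 1 - 2 * k = 1 by omega,
        Nat.choose_succ_self_right]
      push_cast
      ring
    have hI : incL h (2 * k + 3) k = ∑ i ∈ Finset.range k,
        (((2 * k + 3 - (i + 1)).choose (i + 1) : ℝ) * h ^ (2 * k + 3 - 2 * (i + 1))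
          + ((2 * k + 1 - i).choose i : ℝ) * h ^ (2 * k + 1 - 2 * i)) + h ^ (2 * k + 3) := by
      unfold incL
      rw [Finset.sum_range_succ']
      congr 1
      · apply Finset.sum_congr rfl
        intro i hi
        rw [Finset.mem_range] at hi
        rw [coeff_eq (2 * k + 3) (i + 1) (by omega) (by omega),
          show 2 * k + 3 - 1 - (i + 1) = 2 * k + 1 - i by omega, Nat.add_sub_cancel,
          show 2 * k + 3 - 2 * (i + 1) = 2 * k + 1 - 2 * i by omega, add_mul]
      · have h0 : ((2 * k + 3 : ℕ) : ℝ) ≠ 0 := hcast _ (by omega)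
        simp only [Nat.sub_zero, Nat.mul_zero, Nat.choose_zero_right, Nat.cast_one, mul_one,
          div_self h0, one_mul]
    rw [hI, Finset.sum_add_distrib, hL, hS3, hS1]
    push_cast
    ring
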